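/- Let Q be a finite quiver with face set Q_2 giving a cell decomposition of a surface, with coboundary map d : Z^{Q_1} → Z^{Q_2} summing a function over the arrows in the boundary of each face. Define N^+ = {v ∈ N^{Q_1} : d(v) = λ·1 for some λ ∈ N}, with degree deg(v) = λ. Then every element v ∈ N^+ of degree λ is a sum of λ perfect matchings, where a perfect matching is an element π ∈ {0,1}^{Q_1} with d(π) = 1. -/

import Mathlib

open Finset

/-- Boundaries of faces in one colour class are pairwise disjoint. -/
private lemma bdry_disjoint {Q1 Q2 : Type} [DecidableEq Q1]
    (bdry : Q2 → Finset Q1) (c : Q2 → Prop)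
    (hc : ∀ a : Q1, ∃! f : Q2, c f ∧ a ∈ bdry f)
    {f g : Q2} (hf : c f) (hg : c g) (hfg : f ≠ g) :
    Disjoint (bdry f) (bdry g) := by
  rw [Finset.disjoint_left]
  intro a haf hag
  obtain ⟨u, _, hu⟩ := hc a
  exact hfg ((hu f ⟨hf, haf⟩).trans (hu g ⟨hg, hag⟩).symm)

private lemma sum_biUnion_class {Q1 Q2 : Type} [DecidableEq Q1] [DecidableEq Q2]
    (bdry : Q2 → Finset Q1) (c : Q2 → Prop)
    (hc : ∀ a : Q1, ∃! f : Q2, c f ∧ a ∈ bdry f)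
    (v : Q1 → ℕ) (lam : ℕ) (hv : ∀ f : Q2, ∑ a ∈ bdry f, v a = lam)
    (S : Finset Q2) (hS : ∀ f ∈ S, c f) :
    ∑ a ∈ S.biUnion bdry, v a = S.card * lam := by
  rw [Finset.sum_biUnion, Finset.sum_congr rfl fun f _ => hv f, Finset.sum_const, smul_eq_mul]
  intro f hf g hg hfg
  exact bdry_disjoint bdry c hc (hS f hf) (hS g hg) hfg

/-- Extract one perfect matching below `v`. -/
private lemma extract_matching {Q1 Q2 : Type} [Fintype Q1] [DecidableEq Q1] [Fintype Q2]
    (bdry : Q2 → Finset Q1) (black : Q2 → Prop)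
    (hblack : ∀ a : Q1, ∃! f : Q2, black f ∧ a ∈ bdry f)
    (hwhite : ∀ a : Q1, ∃! f : Q2, ¬ black f ∧ a ∈ bdry f)
    (v : Q1 → ℕ) (lam : ℕ) (hlam : 0 < lam)
    (hv : ∀ f : Q2, ∑ a ∈ bdry f, v a = lam) :
    ∃ π : Q1 → ℕ, (∀ a, π a ≤ v a) ∧ (∀ a, π a ≤ 1) ∧ ∀ f, ∑ a ∈ bdry f, π a = 1 := by
  classical
  -- Hall setup
  set t : {f : Q2 // black f} → Finset {f : Q2 // ¬ black f} :=
    fun b => univ.filter (fun w => ∃ a ∈ bdry b.1, 0 < v a ∧ a ∈ bdry w.1) with ht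
  have hall : ∀ s : Finset {f : Q2 // black f}, s.card ≤ (s.biUnion t).card := by
    intro s
    have h1 : ∑ a ∈ (s.image Subtype.val).biUnion bdry, v a = s.card * lam := by
      rw [sum_biUnion_class bdry black hblack v lam hv _
        (fun f hf => by obtain ⟨b, _, rfl⟩ := Finset.mem_image.mp hf; exact b.2)]
      rw [Finset.card_image_of_injective _ Subtype.val_injective]
    have h2 : ∑ a ∈ (((s.biUnion t)).image Subtype.val).biUnion bdry, v a
        = (s.biUnion t).card * lam := by
      rw [sum_biUnion_class bdry (fun f => ¬ black f) hwhite v lam hv _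
        (fun f hf => by obtain ⟨w, _, rfl⟩ := Finset.mem_image.mp hf; exact w.2)]
      rw [Finset.card_image_of_injective _ Subtype.val_injective]
    have hsub : ∑ a ∈ (s.image Subtype.val).biUnion bdry, v a
        ≤ ∑ a ∈ (((s.biUnion t)).image Subtype.val).biUnion bdry, v a := by
      rw [← Finset.sum_filter_ne_zero]
      apply Finset.sum_le_sum_of_subset
      intro a ha
      simp only [Finset.mem_filter, Finset.mem_biUnion, Finset.mem_image] at ha ⊢
      obtain ⟨⟨f, ⟨⟨b, hb, rfl⟩, hab⟩⟩, hva⟩ := ha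
      obtain ⟨w, hw, _⟩ := hwhite a
      refine ⟨w, ⟨⟨⟨w, hw.1⟩, ?_, rfl⟩, hw.2⟩⟩
      refine ⟨b, hb, ?_⟩
      simp only [ht, Finset.mem_filter, Finset.mem_univ, true_and]
      exact ⟨a, hab, Nat.pos_of_ne_zero hva, hw.2⟩
    have := h1 ▸ h2 ▸ hsub
    exact Nat.le_of_mul_le_mul_right this hlam
  obtain ⟨g, hginj, hgmem⟩ := (Finset.all_card_le_biUnion_card_iff_exists_injective t).mp hall
  -- g is bijective since the two colour classes have the same cardinality
  have hcard : Fintype.card {f : Q2 // black f} = Fintype.card {f : Q2 // ¬ black f} := by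
    have hB : ∑ a ∈ (univ.image (Subtype.val : {f : Q2 // black f} → Q2)).biUnion bdry, v a
        = Fintype.card {f : Q2 // black f} * lam := by
      rw [sum_biUnion_class bdry black hblack v lam hv _ (by simp),
        Finset.card_image_of_injective _ Subtype.val_injective, Finset.card_univ]
    have hW : ∑ a ∈ (univ.image (Subtype.val : {f : Q2 // ¬ black f} → Q2)).biUnion bdry, v a
        = Fintype.card {f : Q2 // ¬ black f} * lam := by
      rw [sum_biUnion_class bdry (fun f => ¬ black f) hwhite v lam hv _ (by simp),
        Finset.card_image_of_injective _ Subtype.val_injective, Finset.card_univ]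
    have hsame : (univ.image (Subtype.val : {f : Q2 // black f} → Q2)).biUnion bdry
        = (univ.image (Subtype.val : {f : Q2 // ¬ black f} → Q2)).biUnion bdry := by
      apply Finset.ext
      intro a
      simp only [Finset.mem_biUnion, Finset.mem_image, Finset.mem_univ]
      constructor
      · rintro ⟨f, ⟨⟨b, _, rfl⟩, hab⟩⟩
        obtain ⟨w, hw, _⟩ := hwhite a
        exact ⟨w, ⟨⟨w, hw.1⟩, trivial, rfl⟩, hw.2⟩
      · rintro ⟨f, ⟨⟨w, _, rfl⟩, hab⟩⟩
        obtain ⟨b, hb, _⟩ := hblack a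
        exact ⟨b, ⟨⟨b, hb.1⟩, trivial, rfl⟩, hb.2⟩
    have heq : Fintype.card {f : Q2 // black f} * lam
        = Fintype.card {f : Q2 // ¬ black f} * lam := by
      rw [← hB, ← hW, hsame]
    exact Nat.eq_of_mul_eq_mul_right hlam heq
  have hgsurj : Function.Surjective g :=
    Function.Injective.surjective_of_finite (Fintype.equivOfCardEq hcard) hginj
  -- choose the arrow for each black face
  have hchoice : ∀ b : {f : Q2 // black f},
      ∃ a : Q1, a ∈ bdry b.1 ∧ 0 < v a ∧ a ∈ bdry (g b).1 := by
    intro b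
    have := hgmem b
    simp only [ht, Finset.mem_filter] at this
    exact this.2
  choose ar har1 har2 har3 using hchoice
  have harinj : Function.Injective ar := by
    intro b b' h
    apply hginj
    obtain ⟨w, _, hw⟩ := hwhite (ar b)
    exact Subtype.ext ((hw _ ⟨(g b).2, har3 b⟩).trans (hw _ ⟨(g b').2, h ▸ har3 b'⟩).symm)
  set M : Finset Q1 := univ.image ar with hM
  refine ⟨fun a => if a ∈ M then 1 else 0, ?_, ?_, ?_⟩
  · intro a
    dsimp only
    split_ifs with h
    · simp only [hM, Finset.mem_image, Finset.mem_univ] at h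
      obtain ⟨b, _, rfl⟩ := h
      exact har2 b
    · exact Nat.zero_le _
  · intro a; dsimp only; split_ifs <;> simp
  · intro f
    rw [Finset.sum_ite_mem, Finset.sum_const, smul_eq_mul, mul_one]
    by_cases hf : black f
    · -- exactly one arrow of M in bdry f, namely ar ⟨f, hf⟩
      have : bdry f ∩ M = {ar ⟨f, hf⟩} := by
        apply Finset.ext
        intro a
        simp only [Finset.mem_inter, hM, Finset.mem_image, Finset.mem_univ, true_and,
          Finset.mem_singleton]
        constructor
        · rintro ⟨haf, b, rfl⟩
          obtain ⟨u, _, hu⟩ := hblack (ar b)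
          have h1 : (b : Q2) = u := hu _ ⟨b.2, har1 b⟩
          have h2 : f = u := hu _ ⟨hf, haf⟩
          congr 1
          exact Subtype.ext (h1.trans h2.symm)
        · rintro rfl
          exact ⟨har1 _, ⟨f, hf⟩, rfl⟩
      rw [this, Finset.card_singleton]
    · obtain ⟨b, hbsurj⟩ := hgsurj ⟨f, hf⟩
      have : bdry f ∩ M = {ar b} := by
        apply Finset.ext
        intro a
        simp only [Finset.mem_inter, hM, Finset.mem_image, Finset.mem_univ, true_and,
          Finset.mem_singleton]
        constructor
        · rintro ⟨haf, b', rfl⟩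
          obtain ⟨u, _, hu⟩ := hwhite (ar b')
          have h1 : ((g b') : Q2) = u := hu _ ⟨(g b').2, har3 b'⟩
          have h2 : f = u := hu _ ⟨hf, haf⟩
          have : g b' = g b := by rw [hbsurj]; exact Subtype.ext (h1.trans h2.symm)
          exact congrArg ar (hginj this)
        · rintro rfl
          refine ⟨?_, b, rfl⟩
          have := har3 b
          rw [hbsurj] at this
          exact this
      rw [this, Finset.card_singleton]

theorem degree_lambda_is_sum_of_lambda_perfect_matchings
    {Q1 Q2 : Type} [Fintype Q1] [DecidableEq Q1] [Fintype Q2]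
    (bdry : Q2 → Finset Q1) (black : Q2 → Prop)
    (hblack : ∀ a : Q1, ∃! f : Q2, black f ∧ a ∈ bdry f)
    (hwhite : ∀ a : Q1, ∃! f : Q2, ¬ black f ∧ a ∈ bdry f)
    (v : Q1 → ℕ) (lam : ℕ)
    (hv : ∀ f : Q2, ∑ a ∈ bdry f, v a = lam) :
    ∃ P : Fin lam → Q1 → ℕ,
      (∀ s : Fin lam,
        (∀ a : Q1, P s a ≤ 1) ∧ ∀ f : Q2, ∑ a ∈ bdry f, P s a = 1) ∧
      ∀ a : Q1, v a = ∑ s : Fin lam, P s a := by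
  classical
  induction lam generalizing v with
  | zero =>
    refine ⟨fun _ _ => 0, fun s => s.elim0, ?_⟩
    intro a
    obtain ⟨f, hf, _⟩ := hblack a
    have h0 := hv f
    rw [Finset.sum_eq_zero_iff] at h0
    simpa using h0 a hf.2
  | succ n ih =>
    obtain ⟨π, hπv, hπ1, hπd⟩ :=
      extract_matching bdry black hblack hwhite v (n + 1) (Nat.succ_pos n) hv
    have hv' : ∀ f : Q2, ∑ a ∈ bdry f, (v a - π a) = n := by
      intro f
      have hd : ∑ a ∈ bdry f, (v a - π a)
          = ∑ a ∈ bdry f, v a - ∑ a ∈ bdry f, π a :=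
        Finset.sum_tsub_distrib (bdry f) (fun a _ => hπv a)
      rw [hd, hv f, hπd f]
      omega
    obtain ⟨P, hP, hPsum⟩ := ih (fun a => v a - π a) hv'
    refine ⟨Fin.cons π P, ?_, ?_⟩
    · intro s
      refine Fin.cases ?_ ?_ s
      · simpa using ⟨hπ1, hπd⟩
      · intro i
        simpa using hP i
    · intro a
      rw [Fin.sum_univ_succ]
      simp only [Fin.cons_zero, Fin.cons_succ]
      rw [← hPsum a]
      have := hπv a
      omega
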